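/- Let W ∈ k[x_1,…,x_n] and V ∈ k[z_1,…,z_m], and let W ⊞ V ∈ k[x_1,…,x_n,z_1,…,z_m] = MvPolynomial (Fin n ⊕ Fin m) k denote the sum of the images of W and V under the two canonical inclusions. Then there is a k-algebra isomorphism Jac_{W⊞V} ≅ Jac_W ⊗_k Jac_V. In particular, if Jac_W and Jac_V are finite-dimensional over k then so is Jac_{W⊞V}, i.e. the sum of two potentials is again a potential (well-definedness of the monoidal product of the bicategory of Landau-Ginzburg models on objects). -/

import Mathlib

open MvPolynomial

/-- The Jacobian ideal of `W`, generated by all partial derivatives of `W`. -/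
noncomputable def jacIdeal {k : Type*} [CommRing k] {σ : Type*}
    (W : MvPolynomial σ k) : Ideal (MvPolynomial σ k) :=
  Ideal.span (Set.range fun i : σ => pderiv i W)

section Aux

open TensorProduct

variable {k : Type*} [CommRing k] {σ τ : Type*}

lemma pderiv_boxsum_inl (W : MvPolynomial σ k) (V : MvPolynomial τ k) (i : σ) :
    pderiv (Sum.inl i) (rename Sum.inl W + rename Sum.inr V)
      = rename (Sum.inl : σ → σ ⊕ τ) (pderiv i W) := by
  classical
  have h0 : pderiv (Sum.inl i) (rename (Sum.inr : τ → σ ⊕ τ) V) = 0 := by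
    apply pderiv_eq_zero_of_notMem_vars
    intro h
    have := vars_rename (Sum.inr : τ → σ ⊕ τ) V h
    simp only [Finset.mem_image] at this
    obtain ⟨j, -, hj⟩ := this
    exact Sum.inr_ne_inl hj
  rw [map_add, h0, add_zero, pderiv_rename Sum.inl_injective]

lemma pderiv_boxsum_inr (W : MvPolynomial σ k) (V : MvPolynomial τ k) (j : τ) :
    pderiv (Sum.inr j) (rename Sum.inl W + rename Sum.inr V)
      = rename (Sum.inr : τ → σ ⊕ τ) (pderiv j V) := by
  classical
  have h0 : pderiv (Sum.inr j) (rename (Sum.inl : σ → σ ⊕ τ) W) = 0 := by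
    apply pderiv_eq_zero_of_notMem_vars
    intro h
    have := vars_rename (Sum.inl : σ → σ ⊕ τ) W h
    simp only [Finset.mem_image] at this
    obtain ⟨i, -, hi⟩ := this
    exact Sum.inl_ne_inr hi
  rw [map_add, h0, zero_add, pderiv_rename Sum.inr_injective]

lemma rename_inl_mem (W : MvPolynomial σ k) (V : MvPolynomial τ k) (i : σ) :
    rename (Sum.inl : σ → σ ⊕ τ) (pderiv i W)
      ∈ jacIdeal (rename Sum.inl W + rename Sum.inr V) := by
  rw [← pderiv_boxsum_inl W V i]
  exact Ideal.subset_span ⟨Sum.inl i, rfl⟩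

lemma rename_inr_mem (W : MvPolynomial σ k) (V : MvPolynomial τ k) (j : τ) :
    rename (Sum.inr : τ → σ ⊕ τ) (pderiv j V)
      ∈ jacIdeal (rename Sum.inl W + rename Sum.inr V) := by
  rw [← pderiv_boxsum_inr W V j]
  exact Ideal.subset_span ⟨Sum.inr j, rfl⟩

/-- The map `k[x,z] → Jac_W ⊗ Jac_V`. -/
noncomputable def toTensorQuot (W : MvPolynomial σ k) (V : MvPolynomial τ k) :
    MvPolynomial (σ ⊕ τ) k →ₐ[k]
      (MvPolynomial σ k ⧸ jacIdeal W) ⊗[k] (MvPolynomial τ k ⧸ jacIdeal V) :=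
  aeval (Sum.elim
    (fun i : σ => Ideal.Quotient.mk (jacIdeal W) (X i) ⊗ₜ[k]
      (1 : MvPolynomial τ k ⧸ jacIdeal V))
    (fun j : τ => (1 : MvPolynomial σ k ⧸ jacIdeal W) ⊗ₜ[k]
      Ideal.Quotient.mk (jacIdeal V) (X j)))

lemma toTensorQuot_comp_rename_inl (W : MvPolynomial σ k) (V : MvPolynomial τ k) :
    (toTensorQuot W V).comp (rename (Sum.inl : σ → σ ⊕ τ)) =
      (Algebra.TensorProduct.includeLeft :
          (MvPolynomial σ k ⧸ jacIdeal W) →ₐ[k] _).comp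
        (Ideal.Quotient.mkₐ k (jacIdeal W)) := by
  apply MvPolynomial.algHom_ext
  intro i
  simp [toTensorQuot]

lemma toTensorQuot_comp_rename_inr (W : MvPolynomial σ k) (V : MvPolynomial τ k) :
    (toTensorQuot W V).comp (rename (Sum.inr : τ → σ ⊕ τ)) =
      (Algebra.TensorProduct.includeRight :
          (MvPolynomial τ k ⧸ jacIdeal V) →ₐ[k] _).comp
        (Ideal.Quotient.mkₐ k (jacIdeal V)) := by
  apply MvPolynomial.algHom_ext
  intro j
  simp [toTensorQuot]

lemma toTensorQuot_vanish (W : MvPolynomial σ k) (V : MvPolynomial τ k) :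
    ∀ p ∈ jacIdeal (rename Sum.inl W + rename Sum.inr V),
      toTensorQuot W V p = 0 := by
  have : jacIdeal (rename Sum.inl W + rename Sum.inr V)
      ≤ RingHom.ker (toTensorQuot W V) := by
    rw [jacIdeal, Ideal.span_le]
    rintro _ ⟨s, rfl⟩
    simp only [SetLike.mem_coe, RingHom.mem_ker]
    cases s with
    | inl i =>
        rw [pderiv_boxsum_inl,
          ← AlgHom.comp_apply, toTensorQuot_comp_rename_inl]
        have : Ideal.Quotient.mkₐ k (jacIdeal W) (pderiv i W) = 0 := by
          rw [Ideal.Quotient.mkₐ_eq_mk, Ideal.Quotient.eq_zero_iff_mem]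
          exact Ideal.subset_span ⟨i, rfl⟩
        rw [AlgHom.comp_apply, this, map_zero]
    | inr j =>
        rw [pderiv_boxsum_inr,
          ← AlgHom.comp_apply, toTensorQuot_comp_rename_inr]
        have : Ideal.Quotient.mkₐ k (jacIdeal V) (pderiv j V) = 0 := by
          rw [Ideal.Quotient.mkₐ_eq_mk, Ideal.Quotient.eq_zero_iff_mem]
          exact Ideal.subset_span ⟨j, rfl⟩
        rw [AlgHom.comp_apply, this, map_zero]
  exact fun p hp => this hp

/-- The induced map `Jac_{W⊞V} → Jac_W ⊗ Jac_V`. -/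
noncomputable def jacToTensor (W : MvPolynomial σ k) (V : MvPolynomial τ k) :
    (MvPolynomial (σ ⊕ τ) k ⧸ jacIdeal (rename Sum.inl W + rename Sum.inr V))
      →ₐ[k] (MvPolynomial σ k ⧸ jacIdeal W) ⊗[k] (MvPolynomial τ k ⧸ jacIdeal V) :=
  Ideal.Quotient.liftₐ _ (toTensorQuot W V) (toTensorQuot_vanish W V)

/-- The induced map `Jac_W → Jac_{W⊞V}`. -/
noncomputable def jacFromLeft (W : MvPolynomial σ k) (V : MvPolynomial τ k) :
    (MvPolynomial σ k ⧸ jacIdeal W) →ₐ[k]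
      (MvPolynomial (σ ⊕ τ) k ⧸ jacIdeal (rename Sum.inl W + rename Sum.inr V)) :=
  Ideal.Quotient.liftₐ _
    ((Ideal.Quotient.mkₐ k _).comp (rename (Sum.inl : σ → σ ⊕ τ)))
    (by
      intro a ha
      have h : rename (Sum.inl : σ → σ ⊕ τ) a
          ∈ jacIdeal (rename Sum.inl W + rename Sum.inr V) := by
        have hle : jacIdeal W ≤ Ideal.comap
            (rename (Sum.inl : σ → σ ⊕ τ) :
              MvPolynomial σ k →ₐ[k] MvPolynomial (σ ⊕ τ) k)
            (jacIdeal (rename Sum.inl W + rename Sum.inr V)) := by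
          rw [jacIdeal, Ideal.span_le]
          rintro _ ⟨i, rfl⟩
          exact Ideal.mem_comap.mpr (rename_inl_mem W V i)
        exact hle ha
      rw [AlgHom.comp_apply, Ideal.Quotient.mkₐ_eq_mk,
        Ideal.Quotient.eq_zero_iff_mem]
      exact h)

/-- The induced map `Jac_V → Jac_{W⊞V}`. -/
noncomputable def jacFromRight (W : MvPolynomial σ k) (V : MvPolynomial τ k) :
    (MvPolynomial τ k ⧸ jacIdeal V) →ₐ[k]
      (MvPolynomial (σ ⊕ τ) k ⧸ jacIdeal (rename Sum.inl W + rename Sum.inr V)) :=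
  Ideal.Quotient.liftₐ _
    ((Ideal.Quotient.mkₐ k _).comp (rename (Sum.inr : τ → σ ⊕ τ)))
    (by
      intro a ha
      have h : rename (Sum.inr : τ → σ ⊕ τ) a
          ∈ jacIdeal (rename Sum.inl W + rename Sum.inr V) := by
        have hle : jacIdeal V ≤ Ideal.comap
            (rename (Sum.inr : τ → σ ⊕ τ) :
              MvPolynomial τ k →ₐ[k] MvPolynomial (σ ⊕ τ) k)
            (jacIdeal (rename Sum.inl W + rename Sum.inr V)) := by
          rw [jacIdeal, Ideal.span_le]
          rintro _ ⟨j, rfl⟩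
          exact Ideal.mem_comap.mpr (rename_inr_mem W V j)
        exact hle ha
      rw [AlgHom.comp_apply, Ideal.Quotient.mkₐ_eq_mk,
        Ideal.Quotient.eq_zero_iff_mem]
      exact h)

/-- The map `Jac_W ⊗ Jac_V → Jac_{W⊞V}`. -/
noncomputable def tensorToJac (W : MvPolynomial σ k) (V : MvPolynomial τ k) :
    (MvPolynomial σ k ⧸ jacIdeal W) ⊗[k] (MvPolynomial τ k ⧸ jacIdeal V)
      →ₐ[k] (MvPolynomial (σ ⊕ τ) k ⧸ jacIdeal (rename Sum.inl W + rename Sum.inr V)) :=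
  Algebra.TensorProduct.productMap (jacFromLeft W V) (jacFromRight W V)

/-- The Jacobi algebra of `W ⊞ V` is the tensor product of the Jacobi algebras. -/
noncomputable def jacBoxSumEquiv (W : MvPolynomial σ k) (V : MvPolynomial τ k) :
    (MvPolynomial (σ ⊕ τ) k ⧸ jacIdeal (rename Sum.inl W + rename Sum.inr V))
      ≃ₐ[k] (MvPolynomial σ k ⧸ jacIdeal W) ⊗[k] (MvPolynomial τ k ⧸ jacIdeal V) :=
  AlgEquiv.ofAlgHom (jacToTensor W V) (tensorToJac W V)
    (by
      apply Algebra.TensorProduct.ext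
      · apply Ideal.Quotient.algHom_ext
        apply MvPolynomial.algHom_ext
        intro i
        simp [jacToTensor, tensorToJac, jacFromLeft, toTensorQuot,
          Ideal.Quotient.liftₐ_apply]
        erw [Ideal.Quotient.lift_mk]
        simp
      · apply Ideal.Quotient.algHom_ext
        apply MvPolynomial.algHom_ext
        intro j
        simp [jacToTensor, tensorToJac, jacFromRight, toTensorQuot,
          Ideal.Quotient.liftₐ_apply]
        erw [Ideal.Quotient.lift_mk]
        simp)
    (by
      apply Ideal.Quotient.algHom_ext
      apply MvPolynomial.algHom_ext
      rintro (i | j)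
      · simp [jacToTensor, tensorToJac, jacFromLeft, jacFromRight, toTensorQuot,
          Ideal.Quotient.liftₐ_apply]
        erw [Ideal.Quotient.lift_mk]
        simp [Ideal.Quotient.liftₐ_apply]
        erw [Ideal.Quotient.lift_mk]
        simp
      · simp [jacToTensor, tensorToJac, jacFromLeft, jacFromRight, toTensorQuot,
          Ideal.Quotient.liftₐ_apply]
        erw [Ideal.Quotient.lift_mk]
        simp [Ideal.Quotient.liftₐ_apply]
        erw [Ideal.Quotient.lift_mk]
        simp)

end Aux

/-- For `W ∈ k[x_1,…,x_n]` and `V ∈ k[z_1,…,z_m]`, there is a `k`-algebra isomorphism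
`Jac_{W⊞V} ≅ Jac_W ⊗_k Jac_V`, where `W ⊞ V` is the sum of the images of `W` and `V`
in `k[x,z]`.  In particular, if `Jac_W` and `Jac_V` are finite-dimensional over `k`,
then so is `Jac_{W⊞V}`. -/
theorem jacobi_algebra_of_sum_of_potentials
    {k : Type*} [Field k] [CharZero k] {n m : ℕ}
    (W : MvPolynomial (Fin n) k) (V : MvPolynomial (Fin m) k) :
    Nonempty
      ((MvPolynomial (Fin n ⊕ Fin m) k ⧸
          jacIdeal (rename Sum.inl W + rename Sum.inr V)) ≃ₐ[k]
        (TensorProduct k (MvPolynomial (Fin n) k ⧸ jacIdeal W)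
          (MvPolynomial (Fin m) k ⧸ jacIdeal V))) ∧
    (FiniteDimensional k (MvPolynomial (Fin n) k ⧸ jacIdeal W) →
      FiniteDimensional k (MvPolynomial (Fin m) k ⧸ jacIdeal V) →
      FiniteDimensional k
        (MvPolynomial (Fin n ⊕ Fin m) k ⧸
          jacIdeal (rename Sum.inl W + rename Sum.inr V))) := by
  refine ⟨⟨jacBoxSumEquiv W V⟩, fun h1 h2 => ?_⟩
  have : FiniteDimensional k
      (TensorProduct k (MvPolynomial (Fin n) k ⧸ jacIdeal W)
        (MvPolynomial (Fin m) k ⧸ jacIdeal V)) :=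
    Module.Finite.tensorProduct k _ _
  exact Module.Finite.equiv (jacBoxSumEquiv W V).symm.toLinearEquiv
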